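/- Let A > 0, C > 0, β > 0, ξ₁ > 0, ξ₂ > 0, and set q = A/(2ξ₁ + A), d = ξ₂/A + ξ₂/(2ξ₁), and B = C·A/ξ₁. Then the first-order condition [2q(C+1) − 1]·∫₀^d β·y²·e^{−βy} dy + d²·(B − 1)·e^{−βd} = 0 holds if and only if B = G(βd), where G = g∘e with e(x) = (2/x²)·eˣ − (1 + 2/x + 2/x²) and g(x) = ½·( −[2C−1+x(2C+1)] + √([2C−1+x(2C+1)]² + 8C(x+1)) ). -/

import Mathlib

/-- The function e(x) = (2/x²)·eˣ − (1 + 2/x + 2/x²). -/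
noncomputable def eFun (x : ℝ) : ℝ :=
  2 / x ^ 2 * Real.exp x - (1 + 2 / x + 2 / x ^ 2)

/-- The function g(x) for a parameter C. -/
noncomputable def gFun (C x : ℝ) : ℝ :=
  (1 / 2) * (-(2 * C - 1 + x * (2 * C + 1)) +
    Real.sqrt ((2 * C - 1 + x * (2 * C + 1)) ^ 2 + 8 * C * (x + 1)))

/-- The composite G = g ∘ e. -/
noncomputable def GFun (C x : ℝ) : ℝ := gFun C (eFun x)

/-- Positive root characterization of a quadratic with positive constant term. -/
lemma quad_iff (P Q B : ℝ) (hQ : 0 < Q) (hB : 0 < B) :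
    B ^ 2 + P * B - Q = 0 ↔ B = (1 / 2) * (-P + Real.sqrt (P ^ 2 + 4 * Q)) := by
  constructor
  · intro h
    have h2 : 0 < 2 * B + P := by nlinarith
    have hs : Real.sqrt (P ^ 2 + 4 * Q) = 2 * B + P := by
      rw [show P ^ 2 + 4 * Q = (2 * B + P) ^ 2 by nlinarith]
      exact Real.sqrt_sq h2.le
    rw [hs]; ring
  · intro h
    have hs : Real.sqrt (P ^ 2 + 4 * Q) = 2 * B + P := by rw [h]; ring
    have h4 : 0 ≤ P ^ 2 + 4 * Q := by nlinarith
    have := Real.sq_sqrt h4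
    rw [hs] at this
    nlinarith

lemma integral_claim (β d : ℝ) (hβ : 0 < β) :
    (∫ y in (0 : ℝ)..d, β * y ^ 2 * Real.exp (-β * y)) =
      2 / β ^ 2 - Real.exp (-(β * d)) * (d ^ 2 + 2 * d / β + 2 / β ^ 2) := by
  have hβ' : β ≠ 0 := hβ.ne'
  have key : ∀ y ∈ Set.uIcc (0 : ℝ) d,
      HasDerivAt (fun y => -(y ^ 2 + 2 * y / β + 2 / β ^ 2) * Real.exp (-β * y))
        (β * y ^ 2 * Real.exp (-β * y)) y := by
    intro y _
    have hv : HasDerivAt (fun y => Real.exp (-β * y)) (Real.exp (-β * y) * -β) y := by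
      simpa using ((hasDerivAt_id y).const_mul (-β)).exp
    have hu : HasDerivAt (fun y : ℝ => -(y ^ 2 + 2 * y / β + 2 / β ^ 2))
        (-(2 * y + 2 / β)) y := by
      have h1 : HasDerivAt (fun y : ℝ => y ^ 2 + 2 * y / β + 2 / β ^ 2)
          (2 * y + 2 / β) y := by
        have := ((hasDerivAt_pow 2 y).add
          (((hasDerivAt_id y).const_mul 2).div_const β)).add_const (2 / β ^ 2)
        simpa using this
      exact h1.neg
    have := hu.mul hv
    refine this.congr_deriv ?_
    field_simp
    ring
  have hcont : Continuous fun y : ℝ => β * y ^ 2 * Real.exp (-β * y) := by fun_prop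
  rw [intervalIntegral.integral_eq_sub_of_hasDerivAt key (hcont.intervalIntegrable 0 d)]
  norm_num
  ring

/-- With q = A/(2ξ₁+A), d = ξ₂/A + ξ₂/(2ξ₁), B = C·A/ξ₁,
the first-order condition
[2q(C+1) − 1]·∫₀^d β y² e^{−βy} dy + d²(B − 1) e^{−βd} = 0 holds iff B = G(βd). -/
theorem stmt_8 (A C β ξ₁ ξ₂ : ℝ) (hA : 0 < A) (hC : 0 < C) (hβ : 0 < β)
    (hξ₁ : 0 < ξ₁) (hξ₂ : 0 < ξ₂) :
    ((2 * (A / (2 * ξ₁ + A)) * (C + 1) - 1) *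
        (∫ y in (0 : ℝ)..(ξ₂ / A + ξ₂ / (2 * ξ₁)), β * y ^ 2 * Real.exp (-β * y)) +
      (ξ₂ / A + ξ₂ / (2 * ξ₁)) ^ 2 * (C * A / ξ₁ - 1) *
        Real.exp (-β * (ξ₂ / A + ξ₂ / (2 * ξ₁))) = 0)
      ↔ C * A / ξ₁ = GFun C (β * (ξ₂ / A + ξ₂ / (2 * ξ₁))) := by
  set d : ℝ := ξ₂ / A + ξ₂ / (2 * ξ₁) with hd_def
  have hd : 0 < d := by positivity
  have hx : 0 < β * d := by positivity
  set E : ℝ := eFun (β * d) with hE_def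
  set B : ℝ := C * A / ξ₁ with hB_def
  have hB : 0 < B := by positivity
  have hE1 : 0 < E + 1 := by
    have h1 : β * d + 1 < Real.exp (β * d) := Real.add_one_lt_exp hx.ne'
    have key : E + 1 = 2 / (β * d) ^ 2 * (Real.exp (β * d) - (β * d) - 1) := by
      rw [hE_def, eFun]; field_simp; ring
    rw [key]
    apply mul_pos (by positivity)
    linarith
  have hint := integral_claim β d hβ
  have hexp : Real.exp (-(β * d)) * Real.exp (β * d) = 1 := by
    rw [← Real.exp_add]; simp
  have hI : (∫ y in (0 : ℝ)..d, β * y ^ 2 * Real.exp (-β * y)) =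
      d ^ 2 * Real.exp (-(β * d)) * E := by
    have h2 : d ^ 2 * Real.exp (-(β * d)) * E =
        2 / β ^ 2 * (Real.exp (-(β * d)) * Real.exp (β * d)) -
          Real.exp (-(β * d)) * (d ^ 2 + 2 * d / β + 2 / β ^ 2) := by
      rw [hE_def, eFun]; field_simp
    rw [hint, h2, hexp, mul_one]
  rw [hI, show -β * d = -(β * d) by ring]
  have hB2C : (0:ℝ) < B + 2 * C := by linarith
  have hq : (2 * (A / (2 * ξ₁ + A)) * (C + 1) - 1) = (B * (2*C+1) - 2*C) / (B + 2*C) := by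
    have h1 : (0:ℝ) < 2 * ξ₁ + A := by linarith
    rw [hB_def]
    field_simp
    ring
  have factor : (B * (2*C+1) - 2*C) / (B + 2*C) * (d ^ 2 * Real.exp (-(β * d)) * E) +
      d ^ 2 * (B - 1) * Real.exp (-(β * d)) =
      (d ^ 2 * Real.exp (-(β * d)) / (B + 2*C)) *
        (B ^ 2 + (2*C - 1 + E*(2*C+1)) * B - 2*C*(E+1)) := by
    field_simp
    ring
  have hfac : d ^ 2 * Real.exp (-(β * d)) / (B + 2*C) ≠ 0 :=
    ne_of_gt (div_pos (by positivity) hB2C)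
  rw [hq, factor, mul_eq_zero, or_iff_right hfac,
    quad_iff _ _ _ (by positivity) hB]
  have hG : GFun C (β * d) = (1/2) * (-(2*C - 1 + E*(2*C+1)) +
      Real.sqrt ((2*C - 1 + E*(2*C+1)) ^ 2 + 4 * (2*C*(E+1)))) := by
    rw [GFun, gFun, ← hE_def, show (8:ℝ) * C * (E+1) = 4 * (2*C*(E+1)) by ring]
  rw [hG]
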